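/- For every x ∈ {1, …, L}, b_x† (ζ†)^{(L−1)/2} Φ0 = 0. -/

import Mathlib

noncomputable section

/-- `w_x = sin(δ/2)` for odd `x`, `cos(δ/2)` for even `x`. -/
def wR (δ : ℝ) (x : ℕ) : ℝ := if Odd x then Real.sin (δ/2) else Real.cos (δ/2)

/-- The antisymmetric coefficient matrix `F_{x,y}`. -/
def Fc (L : ℕ) (δ : ℝ) (x y : ℕ) : ℂ :=
  if y = x + 1 ∨ (x = 1 ∧ y = L) then -(Real.sin δ) / 2
  else if x = y + 1 ∨ (x = L ∧ y = 1) then (Real.sin δ) / 2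
  else 0

variable {V : Type*} [AddCommGroup V] [Module ℂ V]

/-- `b_x† = w_x c_x† + w_{x+1} c_{x+1}†` for `1 ≤ x ≤ L−1`, and
`b_L† = −w_1 c_1† + w_L c_L†` (applied to the family `c†`). -/
def bOp (L : ℕ) (δ : ℝ) (c : ℕ → Module.End ℂ V) (x : ℕ) : Module.End ℂ V :=
  if x = L then (-(wR δ 1) : ℂ) • c 1 + (wR δ L : ℂ) • c L
  else (wR δ x : ℂ) • c x + (wR δ (x+1) : ℂ) • c (x+1)

/-- `ã_x† = (1/sin δ)(Σ_{y=1}^{x} w_y c_y† − Σ_{y=x+1}^{L} w_y c_y†)` for `1 ≤ x ≤ L−1`,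
and `ã_L† = (1/sin δ) Σ_{y=1}^{L} w_y c_y†`. -/
def taOp (L : ℕ) (δ : ℝ) (c : ℕ → Module.End ℂ V) (x : ℕ) : Module.End ℂ V :=
  if x = L then ((Real.sin δ : ℂ))⁻¹ • ∑ y ∈ Finset.Icc 1 L, (wR δ y : ℂ) • c y
  else ((Real.sin δ : ℂ))⁻¹ •
    (∑ y ∈ Finset.Icc 1 x, (wR δ y : ℂ) • c y - ∑ y ∈ Finset.Icc (x+1) L, (wR δ y : ℂ) • c y)

/-- The pair operator `ζ† = Σ_{x,y=1}^{L} F_{x,y} ã_x† ã_y†`. -/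
def zetaDag (L : ℕ) (δ : ℝ) (cdag : ℕ → Module.End ℂ V) : Module.End ℂ V :=
  ∑ x ∈ Finset.Icc 1 L, ∑ y ∈ Finset.Icc 1 L,
    Fc L δ x y • (taOp L δ cdag x * taOp L δ cdag y)

/-! ### Auxiliary material for the proof -/

section AuxGeneric

variable {A : Type*} [Ring A] [Algebra ℂ A]

/-- Elements of the span of a pairwise anticommuting set pairwise anticommute. -/
private lemma aux_anticomm {T : Set A} (h : ∀ u ∈ T, ∀ v ∈ T, u * v + v * u = 0) :
    ∀ u ∈ Submodule.span ℂ T, ∀ v ∈ Submodule.span ℂ T, u * v + v * u = 0 := by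
  intro u hu v hv
  induction hu, hv using Submodule.span_induction₂ with
  | mem_mem x y hx hy => exact h x hx y hy
  | zero_left y hy => simp
  | zero_right x hx => simp
  | add_left x y z hx hy hz h1 h2 =>
      have e : x * z + y * z + (z * x + z * y) = x * z + z * x + (y * z + z * y) := by abel
      rw [add_mul, mul_add, e, h1, h2, add_zero]
  | add_right x y z hx hy hz h1 h2 =>
      have e : x * y + x * z + (y * x + z * x) = x * y + y * x + (x * z + z * x) := by abel
      rw [mul_add, add_mul, e, h1, h2, add_zero]
  | smul_left r x y hx hy h1 =>
      rw [smul_mul_assoc, mul_smul_comm, ← smul_add, h1, smul_zero]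
  | smul_right r x y hx hy h1 =>
      rw [smul_mul_assoc, mul_smul_comm, ← smul_add, h1, smul_zero]

private lemma aux_sq {T : Set A} (h : ∀ u ∈ T, ∀ v ∈ T, u * v + v * u = 0) :
    ∀ u ∈ Submodule.span ℂ T, u * u = 0 := by
  intro u hu
  have h2 := aux_anticomm h u hu u hu
  have h3 : (2:ℂ) • (u * u) = 0 := by rw [two_smul]; exact h2
  have := smul_eq_zero.mp h3
  simpa using this

/-- Span of products of `k` elements of `T`. -/
private def lprods (T : Set A) (k : ℕ) : Submodule ℂ A :=
  Submodule.span ℂ {p | ∃ l : List A, l.length = k ∧ (∀ u ∈ l, u ∈ T) ∧ p = l.prod}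

private lemma lprods_mul {T : Set A} {j k : ℕ} {p q : A} (hp : p ∈ lprods T j)
    (hq : q ∈ lprods T k) : p * q ∈ lprods T (j + k) := by
  induction hp using Submodule.span_induction with
  | mem p hp =>
    induction hq using Submodule.span_induction with
    | mem q hq => ?_
    | zero => rw [mul_zero]; exact zero_mem _
    | add x y hx hy h1 h2 => rw [mul_add]; exact add_mem h1 h2
    | smul r x hx h1 => rw [mul_smul_comm]; exact Submodule.smul_mem _ _ h1
    obtain ⟨l1, hl1, hm1, rfl⟩ := hp
    obtain ⟨l2, hl2, hm2, rfl⟩ := hq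
    refine Submodule.subset_span ⟨l1 ++ l2, by simp [hl1, hl2], ?_, (List.prod_append).symm⟩
    intro u hu
    rcases List.mem_append.mp hu with h' | h'
    exacts [hm1 u h', hm2 u h']
  | zero => rw [zero_mul]; exact zero_mem _
  | add x y hx hy h1 h2 => rw [add_mul]; exact add_mem h1 h2
  | smul r x hx h1 => rw [smul_mul_assoc]; exact Submodule.smul_mem _ _ h1

private lemma lprods_one (T : Set A) : (1:A) ∈ lprods T 0 :=
  Submodule.subset_span ⟨[], rfl, by simp, rfl⟩

private lemma lprods_pow {T : Set A} {z : A} (hz : z ∈ lprods T 2) (n : ℕ) :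
    z ^ n ∈ lprods T (2 * n) := by
  induction n with
  | zero => simpa using lprods_one T
  | succ n ih =>
      have h2 : 2 * (n + 1) = 2 * n + 2 := by ring
      rw [h2, pow_succ]
      exact lprods_mul ih hz

/-- A product of `d+1` elements of the range of a linear map from a `d`-dimensional space,
whose values all square to zero, vanishes. -/
private lemma exterior_prod_zero {d : ℕ} (f : (Fin d → ℂ) →ₗ[ℂ] A)
    (hf : ∀ m, f m * f m = 0) (l : List A) (hlen : l.length = d + 1)
    (hmem : ∀ u ∈ l, u ∈ LinearMap.range f) : l.prod = 0 := by
  classical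
  set M := Fin d → ℂ
  set φ : ExteriorAlgebra ℂ M →ₐ[ℂ] A := ExteriorAlgebra.lift ℂ ⟨f, hf⟩ with hφ
  have hφι : ∀ m : M, φ (ExteriorAlgebra.ι ℂ m) = f m := by
    intro m; rw [hφ, ExteriorAlgebra.lift_ι_apply]
  have hex : ∀ i : Fin l.length, ∃ m : M, f m = l.get i := by
    intro i
    obtain ⟨m, hm⟩ := hmem _ (List.get_mem l i)
    exact ⟨m, hm⟩
  choose g hg using hex
  have hdep : ¬ LinearIndependent ℂ g := by
    intro h
    have hc := h.fintype_card_le_finrank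
    rw [Fintype.card_fin, Module.finrank_fin_fun] at hc
    omega
  have h0 : (ExteriorAlgebra.ιMulti ℂ l.length) g = 0 :=
    AlternatingMap.map_linearDependent _ g hdep
  have hl' : l = List.ofFn (fun i => f (g i)) := by
    conv_lhs => rw [← List.ofFn_get l]
    exact congrArg _ (funext fun i => (hg i).symm)
  have hmap : (List.ofFn fun i => f (g i)) =
      (List.ofFn fun i => ExteriorAlgebra.ι ℂ (g i)).map φ := by
    rw [List.map_ofFn]
    exact congrArg _ (funext fun i => (hφι (g i)).symm)
  rw [hl', hmap, ← map_list_prod φ, ← ExteriorAlgebra.ιMulti_apply, h0, map_zero]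

private lemma lprods_L_zero {T : Set A} {N : ℕ}
    (hzero : ∀ l : List A, l.length = N → (∀ u ∈ l, u ∈ T) → l.prod = 0) :
    ∀ p ∈ lprods T N, p = 0 := by
  intro p hp
  have hle : lprods T N ≤ ⊥ := Submodule.span_le.mpr (by
    rintro q ⟨l, hl, hm, rfl⟩
    simpa using hzero l hl hm)
  simpa using hle hp

/-- Telescoping sum over `Icc 1 m`. -/
private lemma telescope {E : Type*} [AddCommGroup E] (g : ℕ → E) (m : ℕ) :
    ∑ x ∈ Finset.Icc 1 m, (g x - g (x+1)) = g 1 - g (m+1) := by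
  induction m with
  | zero => simp
  | succ m ih =>
      rw [Finset.sum_Icc_succ_top (by omega), ih]
      abel

private lemma shift_sum {E : Type*} [AddCommMonoid E] (h : ℕ → E) (m : ℕ) :
    ∑ i ∈ Finset.range m, h (i+1) = ∑ x ∈ Finset.Icc 1 m, h x := by
  induction m with
  | zero => simp
  | succ m ih => rw [Finset.sum_range_succ, Finset.sum_Icc_succ_top (by omega), ih]

end AuxGeneric

/-! ### Identities for the operators -/

section AuxOps

private def tO (δ : ℝ) (cdag : ℕ → Module.End ℂ V) (y : ℕ) : Module.End ℂ V :=
  (wR δ y : ℂ) • cdag y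

private def DO (δ : ℝ) (cdag : ℕ → Module.End ℂ V) (m : ℕ) : Module.End ℂ V :=
  ∑ y ∈ Finset.Icc 1 m, tO δ cdag y

variable (L : ℕ) (δ : ℝ) (cdag : ℕ → Module.End ℂ V)

private lemma taOp_ne {x : ℕ} (hx : x ≠ L) :
    taOp L δ cdag x = ((Real.sin δ : ℂ))⁻¹ •
      (DO δ cdag x - ∑ y ∈ Finset.Icc (x+1) L, tO δ cdag y) := by
  unfold taOp DO tO
  rw [if_neg hx]

private lemma taOp_L : taOp L δ cdag L = ((Real.sin δ : ℂ))⁻¹ • DO δ cdag L := by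
  unfold taOp DO tO
  rw [if_pos rfl]

private lemma bOp_ne {x : ℕ} (hx : x ≠ L) :
    bOp L δ cdag x = tO δ cdag x + tO δ cdag (x+1) := by
  unfold bOp tO
  rw [if_neg hx]

private lemma bOp_L : bOp L δ cdag L = -(tO δ cdag 1) + tO δ cdag L := by
  unfold bOp tO
  rw [if_pos rfl, neg_smul]

private lemma DO_split {u v : ℕ} (h : u ≤ v) :
    DO δ cdag v = DO δ cdag u + ∑ y ∈ Finset.Icc (u+1) v, tO δ cdag y := by
  unfold DO
  have e : ∀ b : ℕ, Finset.Icc 1 b = Finset.Ioc 0 b := fun b => by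
    ext y; simp only [Finset.mem_Icc, Finset.mem_Ioc]; omega
  rw [Finset.Icc_add_one_left_eq_Ioc, e, e,
    Finset.sum_Ioc_consecutive _ (Nat.zero_le u) h]

private lemma DO_succ (m : ℕ) : DO δ cdag (m+1) = DO δ cdag m + tO δ cdag (m+1) := by
  unfold DO
  exact Finset.sum_Icc_succ_top (by omega) _

variable (hs : (Real.sin δ : ℂ) ≠ 0)
include hs

private lemma sA_ne {x : ℕ} (hx : x < L) :
    (Real.sin δ : ℂ) • taOp L δ cdag x = DO δ cdag x + (DO δ cdag x - DO δ cdag L) := by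
  have h2 : ∑ y ∈ Finset.Icc (x+1) L, tO δ cdag y = DO δ cdag L - DO δ cdag x := by
    rw [DO_split δ cdag (le_of_lt hx)]; abel
  rw [taOp_ne L δ cdag (by omega), h2, smul_smul, mul_inv_cancel₀ hs, one_smul]
  abel

private lemma sA_L :
    (Real.sin δ : ℂ) • taOp L δ cdag L = DO δ cdag L := by
  rw [taOp_L, smul_smul, mul_inv_cancel₀ hs, one_smul]

private lemma r_succ {x : ℕ} (hx : x + 1 ≤ L) :
    (Real.sin δ : ℂ) • (taOp L δ cdag (x+1) - taOp L δ cdag x)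
      = tO δ cdag (x+1) + tO δ cdag (x+1) := by
  rcases Nat.lt_or_ge (x+1) L with h | h
  · have h1 := sA_ne L δ cdag hs (x := x+1) h
    have h2 := sA_ne L δ cdag hs (x := x) (by omega)
    have h3 := DO_succ δ cdag x
    rw [smul_sub, h1, h2, h3]
    abel
  · have hxL : x + 1 = L := by omega
    subst hxL
    have h1 := sA_L (x+1) δ cdag hs
    have h2 := sA_ne (x+1) δ cdag hs (x := x) (by omega)
    have h3 := DO_succ δ cdag x
    rw [smul_sub, h1, h2, h3]
    abel

private lemma r_1L (hL : 1 < L) :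
    (Real.sin δ : ℂ) • (taOp L δ cdag 1 + taOp L δ cdag L)
      = tO δ cdag 1 + tO δ cdag 1 := by
  have h1 := sA_ne L δ cdag hs (x := 1) hL
  have h2 := sA_L L δ cdag hs
  have h3 : DO δ cdag 1 = tO δ cdag 1 := by
    unfold DO; rw [Finset.Icc_self, Finset.sum_singleton]
  rw [smul_add, h1, h2, h3]
  abel

private lemma hb1 (hL : 3 ≤ L) :
    (2:ℂ) • bOp L δ cdag 1
      = (Real.sin δ : ℂ) • (taOp L δ cdag 2 + taOp L δ cdag L) := by
  rw [bOp_ne L δ cdag (by omega)]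
  have h1 := r_1L L δ cdag hs (by omega)
  have h2 := r_succ L δ cdag hs (x := 1) (by omega)
  linear_combination (norm := module) -h1 - h2

private lemma hbmid {m : ℕ} (hm : m + 2 ≤ L) :
    (2:ℂ) • bOp L δ cdag (m+1)
      = (Real.sin δ : ℂ) • (taOp L δ cdag (m+2) - taOp L δ cdag m) := by
  rw [bOp_ne L δ cdag (by omega)]
  have h1 := r_succ L δ cdag hs (x := m) (by omega)
  have h2 := r_succ L δ cdag hs (x := m+1) (by omega)
  linear_combination (norm := module) -h1 - h2

private lemma hbL (hL : 3 ≤ L) :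
    (2:ℂ) • bOp L δ cdag L
      = -((Real.sin δ : ℂ) • (taOp L δ cdag 1 + taOp L δ cdag (L-1))) := by
  rw [bOp_L]
  have h1 := r_1L L δ cdag hs (by omega)
  have h2 := r_succ L δ cdag hs (x := L-1) (by omega)
  have e : L - 1 + 1 = L := by omega
  rw [e] at h2
  linear_combination (norm := module) h1 - h2

end AuxOps

/-- The linear dependency `∑ (-1)^x b_x = 0` (for odd length `2n+1`). -/
private lemma hdep (n : ℕ) (δ : ℝ) (cdag : ℕ → Module.End ℂ V) :
    ∑ x ∈ Finset.Icc 1 (2*n+1), ((-1:ℂ))^x • bOp (2*n+1) δ cdag x = 0 := by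
  have hsplit := Finset.sum_Icc_succ_top (a := 1) (b := 2*n)
    (f := fun x => ((-1:ℂ))^x • bOp (2*n+1) δ cdag x) (by omega)
  rw [show 2*n+1 = (2*n)+1 from rfl, hsplit]
  have hmid : ∑ x ∈ Finset.Icc 1 (2*n), ((-1:ℂ))^x • bOp (2*n+1) δ cdag x
      = ∑ x ∈ Finset.Icc 1 (2*n),
          (((-1:ℂ))^x • tO δ cdag x - ((-1:ℂ))^(x+1) • tO δ cdag (x+1)) := by
    refine Finset.sum_congr rfl ?_
    intro x hx
    have hx' := Finset.mem_Icc.mp hx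
    rw [bOp_ne (2*n+1) δ cdag (by omega), smul_add]
    have e : ((-1:ℂ))^(x+1) = -(((-1:ℂ))^x) := by rw [pow_succ]; ring
    rw [e, neg_smul, sub_neg_eq_add]
  rw [hmid, telescope (fun x => ((-1:ℂ))^x • tO δ cdag x) (2*n),
    bOp_L (2*n+1) δ cdag]
  have e1 : ((-1:ℂ))^(2*n+1) = -1 := Odd.neg_one_pow ⟨n, by ring⟩
  rw [e1, pow_one]
  simp only [neg_smul, one_smul, smul_add, smul_neg, neg_neg]
  abel

/-- Main operator identity: `b_z ζ^n = 0`. -/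
private theorem key (n : ℕ) (hn : 1 ≤ n) (δ : ℝ) (hδ0 : 0 < δ) (hδ1 : δ ≤ Real.pi / 2)
    (cdag : ℕ → Module.End ℂ V)
    (car_dd : ∀ x ∈ Finset.Icc 1 (2*n+1), ∀ y ∈ Finset.Icc 1 (2*n+1),
      cdag x * cdag y + cdag y * cdag x = 0) :
    ∀ z ∈ Finset.Icc 1 (2*n+1),
      bOp (2*n+1) δ cdag z * (zetaDag (2*n+1) δ cdag) ^ n = 0 := by
  classical
  set L := 2*n+1 with hLdef
  have hL3 : 3 ≤ L := by omega
  have hsR : 0 < Real.sin δ := by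
    apply Real.sin_pos_of_pos_of_lt_pi hδ0
    have := Real.pi_pos
    linarith
  have hs : (Real.sin δ : ℂ) ≠ 0 := Complex.ofReal_ne_zero.mpr (ne_of_gt hsR)
  -- the span of the creation operators
  set T : Set (Module.End ℂ V) := {u | ∃ x ∈ Finset.Icc 1 L, u = cdag x} with hT
  have hTanti : ∀ u ∈ T, ∀ v ∈ T, u * v + v * u = 0 := by
    rintro u ⟨x, hx, rfl⟩ v ⟨y, hy, rfl⟩
    exact car_dd x hx y hy
  set S : Submodule ℂ (Module.End ℂ V) := Submodule.span ℂ T with hSdef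
  have hanti : ∀ u ∈ S, ∀ v ∈ S, u * v + v * u = 0 := aux_anticomm hTanti
  have hsq : ∀ u ∈ S, u * u = 0 := aux_sq hTanti
  have htS : ∀ y ∈ Finset.Icc 1 L, tO δ cdag y ∈ S := by
    intro y hy
    exact Submodule.smul_mem _ _ (Submodule.subset_span ⟨y, hy, rfl⟩)
  have hDS : ∀ m, m ≤ L → DO δ cdag m ∈ S := by
    intro m hm
    refine Submodule.sum_mem _ ?_
    intro y hy
    have := Finset.mem_Icc.mp hy
    exact htS y (Finset.mem_Icc.mpr (by omega))
  have haS : ∀ x ∈ Finset.Icc 1 L, taOp L δ cdag x ∈ S := by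
    intro x hx
    have hx' := Finset.mem_Icc.mp hx
    by_cases h : x = L
    · rw [h, taOp_L]
      exact Submodule.smul_mem _ _ (hDS L (le_refl L))
    · rw [taOp_ne L δ cdag h]
      refine Submodule.smul_mem _ _ (Submodule.sub_mem _ (hDS x (by omega)) ?_)
      refine Submodule.sum_mem _ ?_
      intro y hy
      have := Finset.mem_Icc.mp hy
      exact htS y (Finset.mem_Icc.mpr (by omega))
  have hbS : ∀ x ∈ Finset.Icc 1 L, bOp L δ cdag x ∈ S := by
    intro x hx
    have hx' := Finset.mem_Icc.mp hx
    by_cases h : x = L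
    · rw [h, bOp_L]
      exact Submodule.add_mem _ (Submodule.neg_mem _ (htS 1 (Finset.mem_Icc.mpr (by omega))))
        (htS L (Finset.mem_Icc.mpr (by omega)))
    · rw [bOp_ne L δ cdag h]
      exact Submodule.add_mem _ (htS x hx) (htS (x+1) (Finset.mem_Icc.mpr (by omega)))
  -- row sums of F against the a's give -b
  have hrowb : ∀ x ∈ Finset.Icc 1 L,
      ∑ y ∈ Finset.Icc 1 L, Fc L δ x y • taOp L δ cdag y = -(bOp L δ cdag x) := by
    intro x hx
    have hx' := Finset.mem_Icc.mp hx
    by_cases hx1 : x = 1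
    · subst hx1
      have hsub : ({2, L} : Finset ℕ) ⊆ Finset.Icc 1 L := by
        intro y hy
        simp only [Finset.mem_insert, Finset.mem_singleton] at hy
        rcases hy with rfl | rfl <;> exact Finset.mem_Icc.mpr (by omega)
      have h0 : ∀ y ∈ Finset.Icc 1 L, y ∉ ({2, L} : Finset ℕ) →
          Fc L δ 1 y • taOp L δ cdag y = 0 := by
        intro y hy hyn
        simp only [Finset.mem_insert, Finset.mem_singleton, not_or] at hyn
        have hy' := Finset.mem_Icc.mp hy
        have : Fc L δ 1 y = 0 := by
          unfold Fc
          rw [if_neg, if_neg]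
          · rintro (h | ⟨h1, h2⟩) <;> omega
          · rintro (h | ⟨h1, h2⟩) <;> omega
        rw [this, zero_smul]
      rw [← Finset.sum_subset hsub h0, Finset.sum_pair (by omega : (2:ℕ) ≠ L)]
      have hF2 : Fc L δ 1 2 = -(Real.sin δ) / 2 := by
        unfold Fc; rw [if_pos (Or.inl rfl)]
      have hFL : Fc L δ 1 L = -(Real.sin δ) / 2 := by
        unfold Fc; rw [if_pos (Or.inr ⟨rfl, rfl⟩)]
      rw [hF2, hFL]
      have h1 := hb1 L δ cdag hs hL3
      linear_combination (norm := module) ((2:ℂ)⁻¹) • h1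
    · by_cases hxL : x = L
      · subst hxL
        have hsub : ({1, L-1} : Finset ℕ) ⊆ Finset.Icc 1 L := by
          intro y hy
          simp only [Finset.mem_insert, Finset.mem_singleton] at hy
          rcases hy with rfl | rfl <;> exact Finset.mem_Icc.mpr (by omega)
        have h0 : ∀ y ∈ Finset.Icc 1 L, y ∉ ({1, L-1} : Finset ℕ) →
            Fc L δ L y • taOp L δ cdag y = 0 := by
          intro y hy hyn
          simp only [Finset.mem_insert, Finset.mem_singleton, not_or] at hyn
          have hy' := Finset.mem_Icc.mp hy
          have : Fc L δ L y = 0 := by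
            unfold Fc
            rw [if_neg, if_neg]
            · rintro (h | ⟨h1, h2⟩) <;> omega
            · rintro (h | ⟨h1, h2⟩) <;> omega
          rw [this, zero_smul]
        rw [← Finset.sum_subset hsub h0, Finset.sum_pair (by omega : (1:ℕ) ≠ L-1)]
        have hF1 : Fc L δ L 1 = (Real.sin δ) / 2 := by
          unfold Fc
          rw [if_neg (by rintro (h | ⟨h1, h2⟩) <;> omega), if_pos (Or.inr ⟨rfl, rfl⟩)]
        have hF2 : Fc L δ L (L-1) = (Real.sin δ) / 2 := by
          unfold Fc
          rw [if_neg (by rintro (h | ⟨h1, h2⟩) <;> omega), if_pos (Or.inl (by omega))]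
        rw [hF1, hF2]
        have h1 := hbL L δ cdag hs hL3
        linear_combination (norm := module) ((2:ℂ)⁻¹) • h1
      · obtain ⟨m, rfl⟩ : ∃ m, x = m + 1 := ⟨x - 1, by omega⟩
        have hm1 : 1 ≤ m := by omega
        have hm2 : m + 2 ≤ L := by omega
        have hsub : ({m, m+2} : Finset ℕ) ⊆ Finset.Icc 1 L := by
          intro y hy
          simp only [Finset.mem_insert, Finset.mem_singleton] at hy
          rcases hy with rfl | rfl <;> exact Finset.mem_Icc.mpr (by omega)
        have h0 : ∀ y ∈ Finset.Icc 1 L, y ∉ ({m, m+2} : Finset ℕ) →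
            Fc L δ (m+1) y • taOp L δ cdag y = 0 := by
          intro y hy hyn
          simp only [Finset.mem_insert, Finset.mem_singleton, not_or] at hyn
          have hy' := Finset.mem_Icc.mp hy
          have : Fc L δ (m+1) y = 0 := by
            unfold Fc
            rw [if_neg, if_neg]
            · rintro (h | ⟨h1, h2⟩) <;> omega
            · rintro (h | ⟨h1, h2⟩) <;> omega
          rw [this, zero_smul]
        rw [← Finset.sum_subset hsub h0, Finset.sum_pair (by omega : m ≠ m+2)]
        have hFm : Fc L δ (m+1) m = (Real.sin δ) / 2 := by
          unfold Fc
          rw [if_neg (by rintro (h | ⟨h1, h2⟩) <;> omega), if_pos (Or.inl rfl)]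
        have hFp : Fc L δ (m+1) (m+2) = -(Real.sin δ) / 2 := by
          unfold Fc
          rw [if_pos (Or.inl rfl)]
        rw [hFm, hFp]
        have h1 := hbmid L δ cdag hs hm2
        linear_combination (norm := module) ((2:ℂ)⁻¹) • h1
  -- zeta as sum of b_x * a_x
  have hzeta : zetaDag L δ cdag
      = ∑ x ∈ Finset.Icc 1 L, bOp L δ cdag x * taOp L δ cdag x := by
    unfold zetaDag
    refine Finset.sum_congr rfl ?_
    intro x hx
    have h1 : ∑ y ∈ Finset.Icc 1 L, Fc L δ x y • (taOp L δ cdag x * taOp L δ cdag y)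
        = taOp L δ cdag x * ∑ y ∈ Finset.Icc 1 L, Fc L δ x y • taOp L δ cdag y := by
      rw [Finset.mul_sum]
      exact Finset.sum_congr rfl fun y _ => (mul_smul_comm _ _ _).symm
    rw [h1, hrowb x hx, mul_neg]
    have h2 := hanti _ (haS x hx) _ (hbS x hx)
    have : bOp L δ cdag x * taOp L δ cdag x
        = -(taOp L δ cdag x * bOp L δ cdag x) := by
      rw [eq_neg_iff_add_eq_zero]
      have e : bOp L δ cdag x * taOp L δ cdag x + taOp L δ cdag x * bOp L δ cdag x
          = taOp L δ cdag x * bOp L δ cdag x + bOp L δ cdag x * taOp L δ cdag x := by abel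
      rw [e]; exact h2
    rw [this]
  -- the "w" vectors and their span membership
  set P : Submodule ℂ (Module.End ℂ V) :=
    Submodule.span ℂ {u | ∃ x ∈ Finset.Icc 1 L, u = bOp L δ cdag x} with hPdef
  set w : ℕ → Module.End ℂ V :=
    fun x => taOp L δ cdag x - ((-1:ℂ))^(x+1) • taOp L δ cdag 1 with hwdef
  have hbP : ∀ x ∈ Finset.Icc 1 L, bOp L δ cdag x ∈ P := by
    intro x hx
    exact Submodule.subset_span ⟨x, hx, rfl⟩
  have hstep : ∀ x : ℕ, 1 ≤ x → x + 2 ≤ L →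
      w (x+2) = w x + ((2:ℂ) * (Real.sin δ : ℂ)⁻¹) • bOp L δ cdag (x+1) := by
    intro x hx1 hx2
    have h1 := hbmid L δ cdag hs (m := x) hx2
    have h2 : ((2:ℂ) * (Real.sin δ : ℂ)⁻¹) • bOp L δ cdag (x+1)
        = taOp L δ cdag (x+2) - taOp L δ cdag x := by
      rw [mul_comm, mul_smul, h1, smul_smul, inv_mul_cancel₀ hs, one_smul]
    rw [h2, hwdef]
    simp only
    have e : ((-1:ℂ))^(x+2+1) = ((-1:ℂ))^(x+1) := by
      rw [show x+2+1 = (x+1)+2 from rfl, pow_add]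
      ring
    rw [e]
    abel
  have hwP : ∀ x ∈ Finset.Icc 1 L, w x ∈ P := by
    have hodd : ∀ k : ℕ, 1 + 2*k ≤ L → w (1 + 2*k) ∈ P := by
      intro k
      induction k with
      | zero =>
          intro _
          have : w 1 = 0 := by
            rw [hwdef]
            simp only
            rw [show (1:ℕ)+1 = 2 from rfl, neg_one_sq, one_smul, sub_self]
          rw [this]
          exact zero_mem _
      | succ k ih =>
          intro h
          have h' : 1 + 2*k ≤ L := by omega
          have e : 1 + 2*(k+1) = (1 + 2*k) + 2 := by ring
          rw [e, hstep (1+2*k) (by omega) (by omega)]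
          exact Submodule.add_mem _ (ih h')
            (Submodule.smul_mem _ _ (hbP _ (Finset.mem_Icc.mpr (by omega))))
    have heven : ∀ k : ℕ, k ≤ n - 1 → w (2*n - 2*k) ∈ P := by
      intro k
      induction k with
      | zero =>
          intro _
          rw [show 2*n - 2*0 = 2*n from by omega]
          have h1 := hbL L δ cdag hs hL3
          have e1 : L - 1 = 2*n := by omega
          have e2 : ((-1:ℂ))^(2*n+1) = -1 := Odd.neg_one_pow ⟨n, by ring⟩
          have hw2n : w (2*n) = (-((2:ℂ) * (Real.sin δ : ℂ)⁻¹)) • bOp L δ cdag L := by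
            have h2 : (-((2:ℂ) * (Real.sin δ : ℂ)⁻¹)) • bOp L δ cdag L
                = taOp L δ cdag 1 + taOp L δ cdag (2*n) := by
              rw [neg_smul, mul_comm, mul_smul, h1, e1, smul_neg, smul_smul,
                inv_mul_cancel₀ hs, one_smul, neg_neg]
            rw [h2, hwdef]
            simp only
            rw [e2]
            simp only [neg_smul, one_smul, sub_neg_eq_add]
            abel
          rw [hw2n]
          exact Submodule.smul_mem _ _ (hbP L (Finset.mem_Icc.mpr (by omega)))
      | succ k ih =>
          intro h
          have h' : k ≤ n - 1 := by omega
          have e : (2*n - 2*(k+1)) + 2 = 2*n - 2*k := by omega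
          have hst := hstep (2*n - 2*(k+1)) (by omega) (by omega)
          rw [e] at hst
          have : w (2*n - 2*(k+1)) = w (2*n - 2*k)
              - ((2:ℂ) * (Real.sin δ : ℂ)⁻¹) • bOp L δ cdag ((2*n - 2*(k+1))+1) := by
            rw [hst]; abel
          rw [this]
          exact Submodule.sub_mem _ (ih h')
            (Submodule.smul_mem _ _ (hbP _ (Finset.mem_Icc.mpr (by omega))))
    intro x hx
    have hx' := Finset.mem_Icc.mp hx
    rcases Nat.even_or_odd x with he | ho
    · obtain ⟨k, hk⟩ := he
      have hx2n : x ≤ 2*n := by omega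
      have := heven (n - k) (by omega)
      rw [show 2*n - 2*(n-k) = x by omega] at this
      exact this
    · obtain ⟨k, hk⟩ := ho
      have := hodd k (by omega)
      rw [show 1 + 2*k = x by omega] at this
      exact this
  -- zeta in terms of b * w
  have hzeta2 : zetaDag L δ cdag = ∑ x ∈ Finset.Icc 1 L, bOp L δ cdag x * w x := by
    rw [hzeta]
    have h1 : ∀ x ∈ Finset.Icc 1 L, bOp L δ cdag x * taOp L δ cdag x
        = bOp L δ cdag x * w x
          + (((-1:ℂ))^(x+1) • bOp L δ cdag x) * taOp L δ cdag 1 := by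
      intro x hx
      have e : taOp L δ cdag x = w x + ((-1:ℂ))^(x+1) • taOp L δ cdag 1 := by
        rw [hwdef]; simp only; abel
      conv_lhs => rw [e]
      rw [mul_add, mul_smul_comm, smul_mul_assoc]
    rw [Finset.sum_congr rfl h1, Finset.sum_add_distrib, ← Finset.sum_mul]
    have h2 : ∑ x ∈ Finset.Icc 1 L, ((-1:ℂ))^(x+1) • bOp L δ cdag x = 0 := by
      have h3 : ∀ x ∈ Finset.Icc 1 L, ((-1:ℂ))^(x+1) • bOp L δ cdag x
          = -(((-1:ℂ))^x • bOp L δ cdag x) := by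
        intro x _
        rw [pow_succ, mul_neg_one, neg_smul]
      rw [Finset.sum_congr rfl h3, Finset.sum_neg_distrib]
      rw [hLdef] at *
      rw [hdep n δ cdag, neg_zero]
    rw [h2, zero_mul, add_zero]
  -- the linear map onto span of b's
  set f : (Fin (2*n) → ℂ) →ₗ[ℂ] Module.End ℂ V :=
    { toFun := fun v => ∑ i : Fin (2*n), v i • bOp L δ cdag (i.1+1)
      map_add' := by
        intro u v
        simp only [Pi.add_apply, add_smul]
        rw [Finset.sum_add_distrib]
      map_smul' := by
        intro c v
        simp only [Pi.smul_apply, smul_eq_mul, RingHom.id_apply, mul_smul]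
        rw [← Finset.smul_sum] } with hfdef
  have hfS : ∀ m, f m ∈ S := by
    intro m
    show ∑ i : Fin (2*n), m i • bOp L δ cdag (i.1+1) ∈ S
    refine Submodule.sum_mem _ ?_
    intro i _
    refine Submodule.smul_mem _ _ (hbS (i.1+1) (Finset.mem_Icc.mpr ?_))
    have := i.isLt
    omega
  have hfsq : ∀ m, f m * f m = 0 := fun m => hsq _ (hfS m)
  have hbrange : ∀ x ∈ Finset.Icc 1 L, bOp L δ cdag x ∈ LinearMap.range f := by
    intro x hx
    have hx' := Finset.mem_Icc.mp hx
    by_cases h : x = L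
    · subst h
      refine ⟨fun i => ((-1:ℂ))^(i.1+1), ?_⟩
      have hfv : f (fun i => ((-1:ℂ))^(i.1+1))
          = ∑ i : Fin (2*n), ((-1:ℂ))^(i.1+1) • bOp L δ cdag (i.1+1) := rfl
      rw [hfv]
      have hconv : ∑ i : Fin (2*n), ((-1:ℂ))^(i.1+1) • bOp L δ cdag (i.1+1)
          = ∑ x ∈ Finset.Icc 1 (2*n), ((-1:ℂ))^x • bOp L δ cdag x := by
        rw [Fin.sum_univ_eq_sum_range (fun i => ((-1:ℂ))^(i+1) • bOp L δ cdag (i+1)) (2*n)]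
        exact shift_sum (fun x => ((-1:ℂ))^x • bOp L δ cdag x) (2*n)
      rw [hconv]
      have hd := hdep n δ cdag
      rw [show 2*n+1 = (2*n)+1 from rfl,
        Finset.sum_Icc_succ_top (a := 1) (b := 2*n) (by omega)] at hd
      have e1 : ((-1:ℂ))^(2*n+1) = -1 := Odd.neg_one_pow ⟨n, by ring⟩
      rw [e1, neg_one_smul, ← hLdef] at hd
      exact sub_eq_zero.mp (by rw [sub_eq_add_neg]; exact hd)
    · refine ⟨Pi.single ⟨x-1, by omega⟩ 1, ?_⟩
      have hfv : f (Pi.single ⟨x-1, by omega⟩ 1)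
          = ∑ i : Fin (2*n), Pi.single (⟨x-1, by omega⟩ : Fin (2*n)) 1 i
              • bOp L δ cdag (i.1+1) := rfl
      rw [hfv, Fintype.sum_eq_single (⟨x-1, by omega⟩ : Fin (2*n))]
      · rw [Pi.single_eq_same, one_smul]
        congr 1
        show x - 1 + 1 = x
        omega
      · intro i hi
        rw [Pi.single_eq_of_ne hi, zero_smul]
  -- assemble
  set Tf : Set (Module.End ℂ V) := (LinearMap.range f : Set (Module.End ℂ V)) with hTf
  have hζ2 : zetaDag L δ cdag ∈ lprods Tf 2 := by
    rw [hzeta2]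
    refine Submodule.sum_mem _ ?_
    intro x hx
    have hPr : P ≤ LinearMap.range f := by
      rw [hPdef]
      refine Submodule.span_le.mpr ?_
      rintro u ⟨y, hy, rfl⟩
      exact hbrange y hy
    refine Submodule.subset_span ⟨[bOp L δ cdag x, w x], rfl, ?_, by simp⟩
    intro u hu
    simp only [List.mem_cons, List.mem_singleton, List.not_mem_nil, or_false] at hu
    rcases hu with rfl | rfl
    · exact hbrange x hx
    · exact hPr (hwP x hx)
  have hζn : (zetaDag L δ cdag) ^ n ∈ lprods Tf (2*n) := lprods_pow hζ2 n
  intro z hz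
  have hbz : bOp L δ cdag z ∈ lprods Tf 1 := by
    refine Submodule.subset_span ⟨[bOp L δ cdag z], rfl, ?_, by simp⟩
    intro u hu
    simp only [List.mem_singleton] at hu
    rw [hu]
    exact hbrange z hz
  have hmm := lprods_mul hbz hζn
  rw [show 1 + 2*n = 2*n+1 by ring] at hmm
  refine lprods_L_zero ?_ _ hmm
  intro l hl hm
  exact exterior_prod_zero f hfsq l hl hm

/-- for every `x ∈ {1,…,L}`, `b_x† (ζ†)^{(L−1)/2} Φ0 = 0`. -/
theorem statement10 (L : ℕ) (hL3 : 3 ≤ L) (hLodd : Odd L)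
    (δ : ℝ) (hδ0 : 0 < δ) (hδ1 : δ ≤ Real.pi / 2)
    (c cdag : ℕ → Module.End ℂ V)
    (car_cc : ∀ x ∈ Finset.Icc 1 L, ∀ y ∈ Finset.Icc 1 L, c x * c y + c y * c x = 0)
    (car_dd : ∀ x ∈ Finset.Icc 1 L, ∀ y ∈ Finset.Icc 1 L,
      cdag x * cdag y + cdag y * cdag x = 0)
    (car_dc : ∀ x ∈ Finset.Icc 1 L, ∀ y ∈ Finset.Icc 1 L,
      cdag x * c y + c y * cdag x = if x = y then 1 else 0)
    (Φ0 : V) (hΦ0 : ∀ x ∈ Finset.Icc 1 L, c x Φ0 = 0) :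
    ∀ x ∈ Finset.Icc 1 L,
      bOp L δ cdag x (((zetaDag L δ cdag)^((L-1)/2)) Φ0) = 0 := by
  obtain ⟨n, rfl⟩ := hLodd
  have hn : 1 ≤ n := by omega
  intro x hx
  have hkey := key n hn δ hδ0 hδ1 cdag car_dd x hx
  have e : (2*n+1-1)/2 = n := by omega
  rw [e, ← Module.End.mul_apply, hkey, LinearMap.zero_apply]

end
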